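/- Let ρ be a map as above. If (K, ⊴_ρ) is a lower finite join-semilattice, then it is a 3-ladder: it is a lower finite lattice in which every element has at most 3 lower covers. -/

import Mathlib

/-- The first uncountable ordinal `ω₁`, as the type of ordinals `< ω₁`. -/
abbrev Omega1 : Type 1 := {o : Ordinal // o < (Cardinal.aleph 1).ord}

/-- The underlying set `K = {0} ∪ (ω₁ × ω × ω)`; `none` plays the role of `0`. -/
abbrev KType : Type 1 := Option (Omega1 × ℕ × ℕ)

/-- The relation `⊴_ρ` on `K` induced by `ρ`: `0 ⊴ x` for all `x`, and
`(α,n,m) ⊴ (β,n',m')` iff `α ≤ β`, `n ≤ n'`, `m ≤ m'` and `ρ α β n ≤ m'`. -/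
def KRel (ρ : Omega1 → Omega1 → ℕ → ℕ) : KType → KType → Prop
  | none, _ => True
  | some _, none => False
  | some (α, n, m), some (β, n', m') => α ≤ β ∧ n ≤ n' ∧ m ≤ m' ∧ ρ α β n ≤ m'

/-- The strict version of a relation. -/
def RelLt {X : Type*} (r : X → X → Prop) (x y : X) : Prop := r x y ∧ x ≠ y

/-- `z` is a lower cover of `x` with respect to the relation `r`. -/
def RelCovBy {X : Type*} (r : X → X → Prop) (z x : X) : Prop :=
  RelLt r z x ∧ ∀ y, ¬ (RelLt r z y ∧ RelLt r y x)

/-- `(X, r)` is an `n`-ladder: `r` is a partial order in which every pair of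
elements has a least upper bound and a greatest lower bound (a lattice), which
is lower finite, and in which every element has at most `n` lower covers. -/
def RelIsNLadder {X : Type*} (r : X → X → Prop) (n : ℕ) : Prop :=
  IsPartialOrder X r ∧
  (∀ x y : X, ∃ z, r x z ∧ r y z ∧ ∀ w, r x w → r y w → r z w) ∧
  (∀ x y : X, ∃ z, r z x ∧ r z y ∧ ∀ w, r w x → r w y → r w z) ∧
  (∀ x : X, {y : X | r y x}.Finite) ∧
  (∀ x : X, {z : X | RelCovBy r z x}.ncard ≤ n)

/-- if `(K, ⊴_ρ)` is a lower finite join-semilattice, then it is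
a 3-ladder. -/
lemma krel_some_iff (ρ : Omega1 → Omega1 → ℕ → ℕ) (p q : Omega1 × ℕ × ℕ) :
    KRel ρ (some p) (some q) ↔
      (p.1 ≤ q.1 ∧ p.2.1 ≤ q.2.1 ∧ p.2.2 ≤ q.2.2 ∧ ρ p.1 q.1 p.2.1 ≤ q.2.2) := by
  obtain ⟨a, b, c⟩ := p; obtain ⟨d, e, f⟩ := q; exact Iff.rfl

lemma krel_none (ρ : Omega1 → Omega1 → ℕ → ℕ) (x : KType) : KRel ρ none x := trivial

lemma not_krel_some_none (ρ : Omega1 → Omega1 → ℕ → ℕ) (p : Omega1 × ℕ × ℕ) :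
    ¬ KRel ρ (some p) none := fun h => h

/-- Every finite set has a least upper bound in a join-semilattice with bottom. -/
lemma finset_join (ρ : Omega1 → Omega1 → ℕ → ℕ)
    (htrans : ∀ a b c : KType, KRel ρ a b → KRel ρ b c → KRel ρ a c)
    (hj : ∀ x y : KType, ∃ z, KRel ρ x z ∧ KRel ρ y z ∧
        ∀ w, KRel ρ x w → KRel ρ y w → KRel ρ z w) :
    ∀ s : Finset KType, ∃ z, (∀ w ∈ s, KRel ρ w z) ∧
      ∀ u, (∀ w ∈ s, KRel ρ w u) → KRel ρ z u := by
  classical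
  intro s
  induction s using Finset.induction_on with
  | empty => exact ⟨none, by simp, fun u _ => trivial⟩
  | insert _ _ hne ih =>
    rename_i a t
    obtain ⟨z, hz1, hz2⟩ := ih
    obtain ⟨z', ha, hzz', hmin⟩ := hj a z
    refine ⟨z', ?_, ?_⟩
    · intro w hw
      rcases Finset.mem_insert.mp hw with rfl | hw
      · exact ha
      · exact htrans _ _ _ (hz1 w hw) hzz'
    · intro u hu
      exact hmin u (hu a (Finset.mem_insert_self a t))
        (hz2 u fun w hw => hu w (Finset.mem_insert_of_mem hw))

theorem K_is_three_ladder (ρ : Omega1 → Omega1 → ℕ → ℕ)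
    (hdiag : ∀ α : Omega1, ∀ n : ℕ, ρ α α n = 0)
    (hjoin : IsPartialOrder KType (KRel ρ) ∧
      ∀ x y : KType, ∃ z, KRel ρ x z ∧ KRel ρ y z ∧
        ∀ w, KRel ρ x w → KRel ρ y w → KRel ρ z w)
    (hLF : ∀ x : KType, {y : KType | KRel ρ y x}.Finite) :
    RelIsNLadder (KRel ρ) 3 := by
  classical
  obtain ⟨hpo, hj⟩ := hjoin
  have htrans : ∀ a b c : KType, KRel ρ a b → KRel ρ b c → KRel ρ a c :=
    fun a b c => hpo.toIsPreorder.toIsTrans.trans a b c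
  have hanti : ∀ a b : KType, KRel ρ a b → KRel ρ b a → a = b :=
    fun a b => by haveI := hpo; exact fun h1 h2 => _root_.antisymm h1 h2
  refine ⟨hpo, hj, ?_, hLF, ?_⟩
  -- meets
  · intro x y
    set L : Set KType := {z | KRel ρ z x ∧ KRel ρ z y} with hL
    have hLfin : L.Finite := (hLF x).subset fun z hz => hz.1
    obtain ⟨z, hub, hlub⟩ := finset_join ρ htrans hj hLfin.toFinset
    have hmem : ∀ w, KRel ρ w x → KRel ρ w y → w ∈ hLfin.toFinset := by
      intro w h1 h2
      simpa [hL] using And.intro h1 h2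
    refine ⟨z, ?_, ?_, fun w h1 h2 => hub w (hmem w h1 h2)⟩
    · exact hlub x fun w hw => ((hLfin.mem_toFinset.mp hw)).1
    · exact hlub y fun w hw => ((hLfin.mem_toFinset.mp hw)).2
  -- covers
  · intro x
    match x with
    | none =>
      have : {z : KType | RelCovBy (KRel ρ) z none} = ∅ := by
        ext z
        simp only [Set.mem_setOf_eq, Set.mem_empty_iff_false, iff_false]
        rintro ⟨⟨hle, hne⟩, -⟩
        match z with
        | none => exact hne rfl
        | some p => exact hle
      rw [this]
      simp
    | some q =>
      obtain ⟨β, n', m'⟩ := q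
      -- the set of elements below x with first coordinate < β (or none)
      set S : Set KType :=
        {y | KRel ρ y (some (β, n', m')) ∧ ∀ p : Omega1 × ℕ × ℕ, y = some p → p.1 < β} with hS
      have hSfin : S.Finite := (hLF _).subset fun z hz => hz.1
      obtain ⟨z3, hub, hlub⟩ := finset_join ρ htrans hj hSfin.toFinset
      have hub' : ∀ w ∈ S, KRel ρ w z3 := fun w hw => hub w (hSfin.mem_toFinset.mpr hw)
      have hz3x : KRel ρ z3 (some (β, n', m')) :=
        hlub _ fun w hw => (hSfin.mem_toFinset.mp hw).1
      -- T : the triples occurring in S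
      have hTfin : {p : Omega1 × ℕ × ℕ | some p ∈ S}.Finite :=
        Set.Finite.preimage (Set.injOn_of_injective (Option.some_injective _)) hSfin
      set T : Finset (Omega1 × ℕ × ℕ) := hTfin.toFinset with hT
      have hmemT : ∀ p, p ∈ T ↔ some p ∈ S := fun p => hTfin.mem_toFinset
      have hz3ne : z3 ≠ some (β, n', m') := by
        rcases Finset.eq_empty_or_nonempty T with hemp | hne
        · -- S ⊆ {none}, so z3 = none
          have : KRel ρ z3 none := by
            apply hlub
            intro w hw
            match w with
            | none => exact trivial
            | some p =>
              exact absurd ((hmemT p).mpr (hSfin.mem_toFinset.mp hw))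
                (by simp [hemp])
          match z3 with
          | none => simp
          | some p => exact absurd this (not_krel_some_none ρ p)
        · -- build an upper bound with first coordinate < β
          set γ : Omega1 := T.sup' hne (fun p => p.1) with hγ
          have hγβ : γ < β := by
            rw [hγ, Finset.sup'_lt_iff]
            intro p hp
            exact ((hmemT p).mp hp).2 p rfl
          set M : ℕ := max m' (T.sup fun p => max p.2.2 (ρ p.1 γ p.2.1)) with hM
          have hubu : ∀ w ∈ S, KRel ρ w (some (γ, n', M)) := by
            intro w hw
            match w with
            | none => exact trivial
            | some p =>
              have hpT : p ∈ T := (hmemT p).mpr hw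
              have hle := (krel_some_iff ρ p _).mp hw.1
              refine (krel_some_iff ρ p _).mpr ⟨?_, hle.2.1, ?_, ?_⟩
              · exact Finset.le_sup' (fun p => p.1) hpT
              · refine le_trans (le_max_left _ _)
                  (le_trans (Finset.le_sup (f := fun p => max p.2.2 (ρ p.1 γ p.2.1)) hpT)
                    (le_max_right _ _))
              · refine le_trans (le_max_right _ _)
                  (le_trans (Finset.le_sup (f := fun p => max p.2.2 (ρ p.1 γ p.2.1)) hpT)
                    (le_max_right _ _))
          have hz3u : KRel ρ z3 (some (γ, n', M)) :=
            hlub _ fun w hw => hubu w (hSfin.mem_toFinset.mp hw)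
          intro heq
          rw [heq] at hz3u
          exact absurd ((krel_some_iff ρ _ _).mp hz3u).1 (not_le.mpr hγβ)
      -- the three candidate covers
      set c1 : KType := some (β, n', m' - 1) with hc1
      set c2 : KType := some (β, n' - 1, m') with hc2
      have hsub : {z : KType | RelCovBy (KRel ρ) z (some (β, n', m'))} ⊆ {c1, c2, z3} := by
        intro z hz
        obtain ⟨⟨hle, hne⟩, hcov⟩ := hz
        -- helper: if z ≤ c < x then z = c
        have key : ∀ c : KType, KRel ρ z c → KRel ρ c (some (β, n', m')) →
            c ≠ some (β, n', m') → z = c := by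
          intro c h1 h2 h3
          by_contra hzc
          exact hcov c ⟨⟨h1, hzc⟩, ⟨h2, h3⟩⟩
        match z with
        | none =>
          right; right
          exact (key z3 (krel_none ρ z3) hz3x hz3ne).symm ▸ key z3 trivial hz3x hz3ne
        | some p =>
          obtain ⟨α, n, m⟩ := p
          obtain ⟨hαβ, hnn, hmm, hρ⟩ := (krel_some_iff ρ _ _).mp hle
          rcases lt_or_eq_of_le hαβ with hlt | heq
          · -- z ∈ S, so z = z3
            right; right
            have hzS : (some (α, n, m) : KType) ∈ S := by
              refine ⟨hle, ?_⟩
              rintro p' hp'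
              obtain rfl := Option.some_injective _ hp'
              exact hlt
            exact key z3 (hub' _ hzS) hz3x hz3ne
          · subst heq
            -- α = β case: compare coordinates
            have hne' : n ≠ n' ∨ m ≠ m' := by
              by_contra h
              push_neg at h
              exact hne (by rw [h.1, h.2])
            rcases Nat.lt_or_ge m m' with hmlt | hmge
            · -- z ≤ c1 < x
              left
              have h1 : KRel ρ (some (α, n, m)) c1 :=
                (krel_some_iff ρ _ _).mpr
                  ⟨le_refl _, hnn, by dsimp only; omega, by simp [hdiag]⟩
              have h2 : KRel ρ c1 (some (α, n', m')) :=
                (krel_some_iff ρ _ _).mpr ⟨le_refl _, le_refl _, by dsimp only; omega, by simp [hdiag]⟩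
              have h3 : c1 ≠ some (α, n', m') := by
                rw [hc1]; intro h
                have := (Option.some_injective _ h)
                simp only [Prod.mk.injEq] at this
                omega
              exact key c1 h1 h2 h3
            · -- m = m', so n < n'
              have hmeq : m = m' := le_antisymm hmm hmge
              have hnlt : n < n' := by
                rcases hne' with h | h
                · exact lt_of_le_of_ne hnn h
                · exact absurd hmeq h
              right; left
              have h1 : KRel ρ (some (α, n, m)) c2 :=
                (krel_some_iff ρ _ _).mpr ⟨le_refl _, by dsimp only; omega, hmm, by simp [hdiag]⟩
              have h2 : KRel ρ c2 (some (α, n', m')) :=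
                (krel_some_iff ρ _ _).mpr ⟨le_refl _, by dsimp only; omega, le_refl _, by simp [hdiag]⟩
              have h3 : c2 ≠ some (α, n', m') := by
                rw [hc2]; intro h
                have := (Option.some_injective _ h)
                simp only [Prod.mk.injEq] at this
                omega
              exact key c2 h1 h2 h3
      calc {z : KType | RelCovBy (KRel ρ) z (some (β, n', m'))}.ncard
          ≤ ({c1, c2, z3} : Set KType).ncard :=
            Set.ncard_le_ncard hsub (Set.toFinite _)
        _ ≤ 3 := by
            refine le_trans (Set.ncard_insert_le _ _) ?_
            have := Set.ncard_insert_le c2 ({z3} : Set KType)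
            simp [Set.ncard_singleton] at this ⊢
            omega
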